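/- For the cycle Cₙ with n ≥ 3: γ₂ᵈ(C₄) = 2, and γ₂ᵈ(Cₙ) = ⌈n/4⌉ for every n ≥ 3 with n ≠ 4. -/

import Mathlib

def IsDisjDomSet {V : Type*} (G : SimpleGraph V) (D : Set V) : Prop :=
  ∀ v : V, v ∉ D → (∃ u ∈ D, G.Adj v u) ∨
    (∃ u ∈ D, ∃ w ∈ D, u ≠ w ∧ G.dist v u = 2 ∧ G.dist v w = 2)

noncomputable def disjDomNum {V : Type*} (G : SimpleGraph V) : ℕ :=
  sInf {n : ℕ | ∃ D : Set V, IsDisjDomSet G D ∧ D.ncard = n}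



open SimpleGraph Finset
open scoped Fin.NatCast Fin.CommRing

variable {m : ℕ}

lemma val_lit (m c : ℕ) (hc : c < m+5) : ((c : ℕ) : Fin (m+5)).val = c := by
  rw [Fin.val_natCast]; exact Nat.mod_eq_of_lt hc

lemma two_eq : (2 : Fin (m+5)) = ((2:ℕ) : Fin (m+5)) := by norm_cast
lemma three_eq : (3 : Fin (m+5)) = ((3:ℕ) : Fin (m+5)) := by norm_cast

lemma val_two5 : ((2 : Fin (m+5)) : ℕ) = 2 := by rw [two_eq, val_lit]; omega
lemma val_three5 : ((3 : Fin (m+5)) : ℕ) = 3 := by rw [three_eq, val_lit]; omega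

lemma two_ne_zero5 : (2 : Fin (m+5)) ≠ 0 := by
  intro h; have := congrArg Fin.val h; rw [val_two5, Fin.val_zero] at this; omega

lemma three_ne_zero5 : (3 : Fin (m+5)) ≠ 0 := by
  intro h; have := congrArg Fin.val h; rw [val_three5, Fin.val_zero] at this; omega

lemma two_ne_one5 : (2 : Fin (m+5)) ≠ 1 := by
  intro h; have := congrArg Fin.val h; rw [val_two5, Fin.val_one] at this; omega

lemma add_two_ne (v : Fin (m+5)) : v + 2 ≠ v := by
  intro h
  have : (2 : Fin (m+5)) = 0 := by linear_combination h
  exact two_ne_zero5 this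

lemma adj_add_one (v : Fin (m+5)) : (cycleGraph (m+5)).Adj v (v+1) := by
  exact (cycleGraph_adj (n := m+3)).mpr (Or.inr (by ring))

lemma not_adj_add_two (v : Fin (m+5)) : ¬ (cycleGraph (m+5)).Adj v (v+2) := by
  intro hadj
  rcases (cycleGraph_adj (n := m+3)).mp hadj with h | h
  · exact three_ne_zero5 (by linear_combination -h)
  · exact two_ne_one5 (by linear_combination h)

lemma dist_add_two (v : Fin (m+5)) : (cycleGraph (m+5)).dist v (v+2) = 2 := by
  have hle : (cycleGraph (m+5)).dist v (v+2) ≤ 2 := by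
    have h2 : (cycleGraph (m+5)).Adj (v+1) (v+2) := by
      have := adj_add_one (v+1); rwa [add_assoc, one_add_one_eq_two] at this
    exact le_trans (SimpleGraph.dist_le
      (SimpleGraph.Walk.cons (adj_add_one v) (SimpleGraph.Walk.cons h2 SimpleGraph.Walk.nil))) (by simp)
  have h0 : (cycleGraph (m+5)).dist v (v+2) ≠ 0 := by
    intro hc
    rcases SimpleGraph.dist_eq_zero_iff_eq_or_not_reachable.mp hc with h | h
    · exact add_two_ne v h.symm
    · exact h ((cycleGraph_connected (n := m+4)) v (v+2))
  have h1 : (cycleGraph (m+5)).dist v (v+2) ≠ 1 := by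
    intro hc
    exact not_adj_add_two v (SimpleGraph.dist_eq_one_iff_adj.mp hc)
  omega

lemma dist_two_cases {v u : Fin (m+5)} (h : (cycleGraph (m+5)).dist v u = 2) :
    u = v + 2 ∨ u = v - 2 := by
  have hne : v ≠ u := by rintro rfl; rw [SimpleGraph.dist_self] at h; omega
  have hr : (cycleGraph (m+5)).Reachable v u := (cycleGraph_connected (n := m+4)) v u
  obtain ⟨p, hp⟩ := hr.exists_walk_length_eq_dist
  rw [h] at hp
  cases p with
  | nil => simp at hp
  | cons h1 q =>
    cases q with
    | nil => simp at hp
    | @cons x y _ h2 r =>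
      have hy : y = u := (SimpleGraph.Walk.eq_of_length_eq_zero (by simpa using hp))
      subst hy
      have h1' := (cycleGraph_adj (n := m+3)).mp h1
      have h2' := (cycleGraph_adj (n := m+3)).mp h2
      rcases h1' with h1 | h1 <;> rcases h2' with h2 | h2
      · right; linear_combination -h1 - h2
      · exact absurd (by linear_combination h1 - h2) hne
      · exact absurd (by linear_combination h2 - h1) hne
      · left; linear_combination h1 + h2

def wt (n : ℕ) (v d : Fin (n+5)) : ℕ :=
  (if d = v ∨ d = v + 1 ∨ d = v - 1 then 2 else 0) + (if d = v + 2 ∨ d = v - 2 then 1 else 0)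

lemma row {D : Set (Fin (m+5))} (hD : IsDisjDomSet (cycleGraph (m+5)) D)
    {F : Finset (Fin (m+5))} (hF : ∀ x, x ∈ F ↔ x ∈ D) (v : Fin (m+5)) :
    2 ≤ ∑ d ∈ F, wt m v d := by
  by_cases hv : v ∈ D
  · refine le_trans ?_ (Finset.single_le_sum (f := wt m v) (fun i _ => Nat.zero_le _) ((hF v).mpr hv))
    unfold wt
    rw [if_pos (Or.inl rfl)]
    omega
  · rcases hD v hv with ⟨u, hu, hadj⟩ | ⟨u, hu, w, hw, hne, hdu, hdw⟩
    · refine le_trans ?_ (Finset.single_le_sum (f := wt m v) (fun i _ => Nat.zero_le _) ((hF u).mpr hu))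
      have : u = v + 1 ∨ u = v - 1 := by
        rcases (cycleGraph_adj (n := m+3)).mp hadj with h | h
        · right; linear_combination -h
        · left; linear_combination h
      unfold wt
      rw [if_pos (Or.inr this)]
      omega
    · have h1 : 1 ≤ wt m v u := by
        unfold wt; rw [if_pos (dist_two_cases hdu)]; omega
      have h2 : 1 ≤ wt m v w := by
        unfold wt; rw [if_pos (dist_two_cases hdw)]; omega
      have hsub : ({u, w} : Finset (Fin (m+5))) ⊆ F := by
        intro x hx
        rcases Finset.mem_insert.mp hx with rfl | hx
        · exact (hF x).mpr hu
        · rw [Finset.mem_singleton] at hx; subst hx; exact (hF x).mpr hw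
      have := Finset.sum_le_sum_of_subset (f := wt m v) hsub
      rw [Finset.sum_pair hne] at this
      omega

lemma col (d : Fin (m+5)) : ∑ v : Fin (m+5), wt m v d ≤ 8 := by
  have key : ∀ v : Fin (m+5), wt m v d ≤
      (if v = d then 2 else 0) + (if v = d - 1 then 2 else 0) + (if v = d + 1 then 2 else 0)
      + (if v = d - 2 then 1 else 0) + (if v = d + 2 then 1 else 0) := by
    intro v
    have e1 : (d = v) ↔ (v = d) := eq_comm
    have e2 : (d = v + 1) ↔ (v = d - 1) := ⟨fun h => by linear_combination -h, fun h => by linear_combination -h⟩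
    have e3 : (d = v - 1) ↔ (v = d + 1) := ⟨fun h => by linear_combination -h, fun h => by linear_combination -h⟩
    have e4 : (d = v + 2) ↔ (v = d - 2) := ⟨fun h => by linear_combination -h, fun h => by linear_combination -h⟩
    have e5 : (d = v - 2) ↔ (v = d + 2) := ⟨fun h => by linear_combination -h, fun h => by linear_combination -h⟩
    unfold wt
    simp only [e1, e2, e3, e4, e5]
    split_ifs <;> first | omega | tauto
  refine le_trans (Finset.sum_le_sum fun v _ => key v) ?_
  rw [show (8:ℕ) = 2 + 2 + 2 + 1 + 1 from rfl]
  simp [Finset.sum_add_distrib, Finset.sum_ite_eq']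

lemma lowerBound {D : Set (Fin (m+5))} (hD : IsDisjDomSet (cycleGraph (m+5)) D) :
    m + 5 ≤ 4 * D.ncard := by
  classical
  have hfin : D.Finite := Set.toFinite D
  have hF : ∀ x, x ∈ hfin.toFinset ↔ x ∈ D := fun x => Set.Finite.mem_toFinset hfin
  have h1 : 2 * (m+5) ≤ ∑ v : Fin (m+5), ∑ d ∈ hfin.toFinset, wt m v d := by
    calc 2*(m+5) = ∑ _v : Fin (m+5), 2 := by simp [Finset.sum_const, Fintype.card_fin]; ring
    _ ≤ _ := Finset.sum_le_sum fun v _ => row hD hF v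
  rw [Finset.sum_comm] at h1
  have h3 : ∑ d ∈ hfin.toFinset, ∑ v : Fin (m+5), wt m v d ≤ ∑ _d ∈ hfin.toFinset, 8 :=
    Finset.sum_le_sum fun d _ => col d
  rw [Finset.sum_const, smul_eq_mul] at h3
  have h4 : D.ncard = hfin.toFinset.card := Set.ncard_eq_toFinset_card D hfin
  omega

lemma val_add_one5 (v : Fin (m+5)) :
    ((v + 1 : Fin (m+5)) : ℕ) = if v.val + 1 < m+5 then v.val + 1 else 0 := by
  have h : ((v + 1 : Fin (m+5)) : ℕ) = (v.val + ((1 : Fin (m+5)) : ℕ)) % (m+5) := rfl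
  rw [h, Fin.val_one]
  split
  · exact Nat.mod_eq_of_lt (by omega)
  · have hv := v.isLt
    rw [show v.val + 1 = m + 5 by omega, Nat.mod_self]

lemma val_add_two5 (v : Fin (m+5)) :
    ((v + 2 : Fin (m+5)) : ℕ) = if v.val + 2 < m+5 then v.val + 2 else v.val + 2 - (m+5) := by
  have h : ((v + 2 : Fin (m+5)) : ℕ) = (v.val + ((2 : Fin (m+5)) : ℕ)) % (m+5) := rfl
  rw [h, val_two5]
  split
  · exact Nat.mod_eq_of_lt (by omega)
  · have hv := v.isLt
    rw [Nat.mod_eq_sub_mod (by omega)]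
    exact Nat.mod_eq_of_lt (by omega)

def domF (m : ℕ) (i : ℕ) : Fin (m+5) := ⟨4*i % (m+5), Nat.mod_lt _ (by omega)⟩

def domFin (m : ℕ) : Finset (Fin (m+5)) := (Finset.range ((m+8)/4)).image (domF m)

lemma mem_domFin {v : Fin (m+5)} : v ∈ domFin m ↔ v.val % 4 = 0 := by
  constructor
  · intro hv
    obtain ⟨i, hi, rfl⟩ := Finset.mem_image.mp hv
    rw [Finset.mem_range] at hi
    have : (domF m i).val = 4*i := Nat.mod_eq_of_lt (by omega)
    omega
  · intro hv
    refine Finset.mem_image.mpr ⟨v.val / 4, Finset.mem_range.mpr ?_, ?_⟩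
    · have := v.isLt; omega
    · have hv4 : 4 * (v.val / 4) = v.val := by omega
      exact Fin.ext (by rw [show (domF m (v.val/4)).val = 4*(v.val/4) % (m+5) from rfl, hv4,
        Nat.mod_eq_of_lt v.isLt])

lemma card_domFin : (domFin m).card = (m+8)/4 := by
  rw [domFin, Finset.card_image_of_injOn, Finset.card_range]
  intro i hi j hj hij
  rw [Finset.mem_coe, Finset.mem_range] at hi hj
  have h1 : (domF m i).val = 4*i := Nat.mod_eq_of_lt (by omega)
  have h2 : (domF m j).val = 4*j := Nat.mod_eq_of_lt (by omega)
  have := congrArg Fin.val hij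
  omega

lemma adj_of_succ {u v : Fin (m+5)} (h : v = u + 1) : (cycleGraph (m+5)).Adj v u :=
  (cycleGraph_adj (n := m+3)).mpr (Or.inl (by rw [h]; ring))

lemma adj_of_succ' {u v : Fin (m+5)} (h : u = v + 1) : (cycleGraph (m+5)).Adj v u :=
  h ▸ adj_add_one v

lemma domFin_isDDS : IsDisjDomSet (cycleGraph (m+5)) (↑(domFin m) : Set (Fin (m+5))) := by
  intro v hv
  rw [Finset.mem_coe, mem_domFin] at hv
  have hlt : v.val < m + 5 := v.isLt
  have memD : ∀ u : Fin (m+5), u.val % 4 = 0 → u ∈ (↑(domFin m) : Set (Fin (m+5))) :=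
    fun u hu => Finset.mem_coe.mpr (mem_domFin.mpr hu)
  have h4 : v.val % 4 = 0 ∨ v.val % 4 = 1 ∨ v.val % 4 = 2 ∨ v.val % 4 = 3 := by omega
  rcases h4 with h4 | h4 | h4 | h4
  · exact absurd h4 hv
  · -- v.val % 4 = 1 : the vertex before v is in D
    obtain ⟨u, huval⟩ : ∃ u : Fin (m+5), u.val = v.val - 1 := ⟨⟨v.val - 1, by omega⟩, rfl⟩
    have hvu : v = u + 1 := by
      refine Fin.ext ?_
      rw [val_add_one5, huval]
      split <;> omega
    exact Or.inl ⟨u, memD u (by omega), adj_of_succ hvu⟩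
  · -- v.val % 4 = 2
    by_cases hedge : v.val = m + 4
    · -- last vertex, adjacent to 0 ∈ D
      obtain ⟨u, huval⟩ : ∃ u : Fin (m+5), u.val = 0 := ⟨⟨0, by omega⟩, rfl⟩
      have huv : u = v + 1 := by
        refine Fin.ext ?_
        rw [val_add_one5, huval]
        split <;> omega
      exact Or.inl ⟨u, memD u (by omega), adj_of_succ' huv⟩
    · -- main case: v-2 and v+2 both in D (v+2 may wrap to 0)
      obtain ⟨u, huval⟩ : ∃ u : Fin (m+5), u.val = v.val - 2 := ⟨⟨v.val - 2, by omega⟩, rfl⟩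
      have hvu : v = u + 2 := by
        refine Fin.ext ?_
        rw [val_add_two5, huval]
        split <;> omega
      have hdu : (cycleGraph (m+5)).dist v u = 2 := by
        rw [SimpleGraph.dist_comm, hvu]
        exact dist_add_two u
      by_cases hedge2 : v.val = m + 3
      · obtain ⟨w, hwval⟩ : ∃ w : Fin (m+5), w.val = 0 := ⟨⟨0, by omega⟩, rfl⟩
        have hwv : w = v + 2 := by
          refine Fin.ext ?_
          rw [val_add_two5, hwval]
          split <;> omega
        refine Or.inr ⟨u, memD u (by omega), w, memD w (by omega), ?_, hdu, by rw [hwv]; exact dist_add_two v⟩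
        intro hcon
        rw [Fin.ext_iff, huval, hwval] at hcon
        omega
      · obtain ⟨w, hwval⟩ : ∃ w : Fin (m+5), w.val = v.val + 2 := ⟨⟨v.val + 2, by omega⟩, rfl⟩
        have hwv : w = v + 2 := by
          refine Fin.ext ?_
          rw [val_add_two5, hwval]
          split <;> omega
        refine Or.inr ⟨u, memD u (by omega), w, memD w (by omega), ?_, hdu, by rw [hwv]; exact dist_add_two v⟩
        intro hcon
        rw [Fin.ext_iff, huval, hwval] at hcon
        omega
  · -- v.val % 4 = 3 : the vertex after v is in D
    by_cases hedge : v.val = m + 4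
    · obtain ⟨u, huval⟩ : ∃ u : Fin (m+5), u.val = 0 := ⟨⟨0, by omega⟩, rfl⟩
      have huv : u = v + 1 := by
        refine Fin.ext ?_
        rw [val_add_one5, huval]
        split <;> omega
      exact Or.inl ⟨u, memD u (by omega), adj_of_succ' huv⟩
    · obtain ⟨u, huval⟩ : ∃ u : Fin (m+5), u.val = v.val + 1 := ⟨⟨v.val + 1, by omega⟩, rfl⟩
      have huv : u = v + 1 := by
        refine Fin.ext ?_
        rw [val_add_one5, huval]
        split <;> omega
      exact Or.inl ⟨u, memD u (by omega), adj_of_succ' huv⟩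

lemma disjDomNum_five (m : ℕ) : disjDomNum (cycleGraph (m+5)) = (m+8)/4 := by
  have hmem : (m+8)/4 ∈ {n : ℕ | ∃ D : Set (Fin (m+5)), IsDisjDomSet (cycleGraph (m+5)) D ∧ D.ncard = n} :=
    ⟨↑(domFin m), domFin_isDDS, by rw [Set.ncard_coe_finset, card_domFin]⟩
  apply le_antisymm
  · exact Nat.sInf_le hmem
  · refine le_csInf ⟨_, hmem⟩ ?_
    rintro j ⟨D, hD, rfl⟩
    have := lowerBound hD
    omega

lemma empty_not_DDS {n : ℕ} (hn : 0 < n) {D : Set (Fin n)} (hD : IsDisjDomSet (cycleGraph n) D)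
    (h0 : D.ncard = 0) : False := by
  have hD0 : D = ∅ := (Set.ncard_eq_zero (Set.toFinite D)).mp h0
  subst hD0
  rcases hD ⟨0, hn⟩ (Set.notMem_empty _) with ⟨u, hu, -⟩ | ⟨u, hu, -⟩ <;>
    exact Set.notMem_empty u hu

lemma disjDomNum_three : disjDomNum (cycleGraph 3) = 1 := by
  have hmem : 1 ∈ {n : ℕ | ∃ D : Set (Fin 3), IsDisjDomSet (cycleGraph 3) D ∧ D.ncard = n} := by
    refine ⟨{0}, ?_, Set.ncard_singleton 0⟩
    intro v hv
    rw [Set.mem_singleton_iff] at hv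
    refine Or.inl ⟨0, rfl, ?_⟩
    rw [SimpleGraph.cycleGraph_three_eq_top]
    exact hv
  apply le_antisymm (Nat.sInf_le hmem)
  refine le_csInf ⟨_, hmem⟩ ?_
  rintro j ⟨D, hD, rfl⟩
  rcases Nat.eq_zero_or_pos D.ncard with h0 | h1
  · exact absurd h0 (fun h => empty_not_DDS (by norm_num) hD h)
  · exact h1

lemma disjDomNum_four : disjDomNum (cycleGraph 4) = 2 := by
  have hmem : 2 ∈ {n : ℕ | ∃ D : Set (Fin 4), IsDisjDomSet (cycleGraph 4) D ∧ D.ncard = n} := by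
    refine ⟨{0, 1}, ?_, Set.ncard_pair (by decide)⟩
    intro v hv
    simp only [Set.mem_insert_iff, Set.mem_singleton_iff, not_or] at hv
    obtain ⟨h0, h1⟩ := hv
    fin_cases v
    · exact absurd rfl h0
    · exact absurd rfl h1
    · exact Or.inl ⟨1, Or.inr rfl, by decide⟩
    · exact Or.inl ⟨0, Or.inl rfl, by decide⟩
  apply le_antisymm (Nat.sInf_le hmem)
  refine le_csInf ⟨_, hmem⟩ ?_
  rintro j ⟨D, hD, rfl⟩
  by_contra hlt
  push_neg at hlt
  interval_cases h : D.ncard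
  · exact empty_not_DDS (by norm_num) hD h
  · obtain ⟨u, rfl⟩ := Set.ncard_eq_one.mp h
    have hv : u + 2 ∉ ({u} : Set (Fin 4)) := by
      rw [Set.mem_singleton_iff]
      fin_cases u <;> decide
    rcases hD (u + 2) hv with ⟨w, hw, hadj⟩ | ⟨a, ha, b, hb, hne, -⟩
    · rw [Set.mem_singleton_iff] at hw
      subst hw
      revert hadj
      fin_cases w <;> decide
    · rw [Set.mem_singleton_iff] at ha hb
      exact hne (ha.trans hb.symm)

lemma ceil_helper (n : ℕ) : (((n+3)/4 : ℕ) : ℤ) = ⌈(n : ℚ) / 4⌉ := by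
  obtain ⟨k, hk⟩ : ∃ k, (n+3)/4 = k := ⟨_, rfl⟩
  have h1 : n ≤ 4 * k := by omega
  have h2 : 4 * k < n + 4 := by omega
  rw [hk, eq_comm, Int.ceil_eq_iff]
  constructor
  · rw [lt_div_iff₀ (by norm_num : (0:ℚ) < 4)]
    have : (4 * k : ℚ) < (n:ℚ) + 4 := by exact_mod_cast h2
    push_cast
    linarith
  · rw [div_le_iff₀ (by norm_num : (0:ℚ) < 4)]
    have : ((n:ℚ)) ≤ 4*k := by exact_mod_cast h1
    push_cast
    linarith

/-- For the cycle `Cₙ` with `n ≥ 3`: `γ₂ᵈ(C₄) = 2`, and `γ₂ᵈ(Cₙ) = ⌈n/4⌉` whenever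
`n ≥ 3` and `n ≠ 4`. -/
theorem disjDomNum_cycleGraph :
    disjDomNum (SimpleGraph.cycleGraph 4) = 2 ∧
    ∀ n : ℕ, 3 ≤ n → n ≠ 4 →
      (disjDomNum (SimpleGraph.cycleGraph n) : ℤ) = ⌈(n : ℚ) / 4⌉ := by
  refine ⟨disjDomNum_four, ?_⟩
  intro n h3 h4
  rcases Nat.lt_or_ge n 5 with h5 | h5
  · have hn : n = 3 := by omega
    subst hn
    rw [disjDomNum_three, ← ceil_helper 3]
  · obtain ⟨m, rfl⟩ : ∃ m, n = m + 5 := ⟨n - 5, by omega⟩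
    rw [disjDomNum_five, ← ceil_helper (m+5)]
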